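/- Let G be the additive subgroup of ℚ × ℚ generated by the set {(1/3ⁿ, 0) : n ∈ ℕ} ∪ {(0,1), (1/2, 1/2)}, with positive cone G⁺ = {(a,b) ∈ G : a > 0} ∪ {(0,0)}. Then G is ultrasimplicial: for every finite subset F of G⁺ there exists a finite ℤ-linearly independent subset S of G⁺ such that every element of F is a sum of elements of S with nonnegative integer coefficients. -/

import Mathlib

/-- Handelman's intrinsic characterization of ultrasimpliciality, used as the
definition. -/
def IsUltrasimplicial {G : Type*} [AddCommGroup G] (pos : Set G) : Prop :=
  ∀ F : Finset G, ↑F ⊆ pos →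
    ∃ S : Finset G, ↑S ⊆ pos ∧
      LinearIndependent ℤ (fun s : (S : Set G) => (s : G)) ∧
      ∀ f ∈ F, ∃ c : G → ℕ, f = ∑ s ∈ S, c s • s

/-- The subgroup of `ℚ × ℚ` generated by `{(1/3ⁿ, 0) : n ∈ ℕ}`, `(0, 1)` and
`(1/2, 1/2)`. -/
def limitGroup : AddSubgroup (ℚ × ℚ) :=
  AddSubgroup.closure
    ((Set.range fun n : ℕ => ((1 / 3 ^ n : ℚ), (0 : ℚ)))
      ∪ {((0 : ℚ), (1 : ℚ)), ((1 / 2 : ℚ), (1 / 2 : ℚ))})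

/-- Every element of `limitGroup` has the form `(m/3^N + k/2, k/2)`. -/
lemma limitGroup.rep {g : ℚ × ℚ} (hg : g ∈ limitGroup) :
    ∃ (N : ℕ) (m k : ℤ), g.1 = m / 3 ^ N + k / 2 ∧ g.2 = k / 2 := by
  induction hg using AddSubgroup.closure_induction with
  | mem x hx =>
    rcases hx with ⟨n, rfl⟩ | hx
    · exact ⟨n, 1, 0, by norm_num, by norm_num⟩
    · rcases hx with rfl | rfl
      · exact ⟨0, -1, 2, by norm_num, by norm_num⟩
      · exact ⟨0, 0, 1, by norm_num, by norm_num⟩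
  | zero => exact ⟨0, 0, 0, by norm_num, by norm_num⟩
  | add x y hx hy ihx ihy =>
    obtain ⟨N1, m1, k1, h1, h2⟩ := ihx
    obtain ⟨N2, m2, k2, h3, h4⟩ := ihy
    refine ⟨N1 + N2, m1 * 3 ^ N2 + m2 * 3 ^ N1, k1 + k2, ?_, ?_⟩
    · have : (x + y).1 = x.1 + y.1 := rfl
      rw [this, h1, h3]
      push_cast
      rw [pow_add]
      have h5 : (3 : ℚ) ^ N1 ≠ 0 := by positivity
      have h6 : (3 : ℚ) ^ N2 ≠ 0 := by positivity
      field_simp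
      ring
    · have : (x + y).2 = x.2 + y.2 := rfl
      rw [this, h2, h4]
      push_cast
      ring
  | neg x hx ih =>
    obtain ⟨N, m, k, h1, h2⟩ := ih
    refine ⟨N, -m, -k, ?_, ?_⟩
    · have : (-x).1 = -x.1 := rfl
      rw [this, h1]; push_cast; ring
    · have : (-x).2 = -x.2 := rfl
      rw [this, h2]; push_cast; ring

lemma limitGroup.w_mem (N : ℕ) : ((1 / 3 ^ N : ℚ), (0 : ℚ)) ∈ limitGroup :=
  AddSubgroup.subset_closure (Or.inl ⟨N, rfl⟩)

lemma limitGroup.p_mem : ((1 / 2 : ℚ), (1 / 2 : ℚ)) ∈ limitGroup :=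
  AddSubgroup.subset_closure (Or.inr (by simp))

lemma limitGroup.u_mem : ((0 : ℚ), (1 : ℚ)) ∈ limitGroup :=
  AddSubgroup.subset_closure (Or.inr (by simp))

lemma limitGroup.s_mem (N : ℕ) (d : ℤ) (hd : (3 : ℤ) ^ N = 2 * d + 1) :
    ((1 / (2 * 3 ^ N) : ℚ), (1 / 2 : ℚ)) ∈ limitGroup := by
  have h := AddSubgroup.add_mem _ limitGroup.p_mem
    (AddSubgroup.zsmul_mem _ (limitGroup.w_mem N) (-d))
  have hd' : (3 : ℚ) ^ N = 2 * (d : ℚ) + 1 := by exact_mod_cast hd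
  have h3 : (3 : ℚ) ^ N ≠ 0 := by positivity
  have heq : ((1 / 2 : ℚ), (1 / 2 : ℚ)) + (-d) • ((1 / 3 ^ N : ℚ), (0 : ℚ))
      = ((1 / (2 * 3 ^ N) : ℚ), (1 / 2 : ℚ)) := by
    have : ((-d : ℤ) • ((1 / 3 ^ N : ℚ), (0 : ℚ))) = ((-d / 3 ^ N : ℚ), (0 : ℚ)) := by
      rw [Prod.smul_def]
      simp [zsmul_eq_mul, div_eq_mul_inv]
    rw [this, Prod.ext_iff]
    constructor
    · show (1 / 2 : ℚ) + (-d / 3 ^ N) = 1 / (2 * 3 ^ N)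
      field_simp
      linarith
    · show (1 / 2 : ℚ) + 0 = 1 / 2
      ring
  rwa [heq] at h

lemma limitGroup.t_mem (N : ℕ) (d : ℤ) (hd : (3 : ℤ) ^ N = 2 * d + 1) :
    ((1 / (2 * 3 ^ N) : ℚ), (-(1 / 2) : ℚ)) ∈ limitGroup := by
  have h := AddSubgroup.sub_mem _ (limitGroup.s_mem N d hd) limitGroup.u_mem
  have heq : ((1 / (2 * 3 ^ N) : ℚ), (1 / 2 : ℚ)) - ((0 : ℚ), (1 : ℚ))
      = ((1 / (2 * 3 ^ N) : ℚ), (-(1 / 2) : ℚ)) := by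
    rw [Prod.ext_iff]
    constructor
    · show (1 / (2 * 3 ^ N) : ℚ) - 0 = 1 / (2 * 3 ^ N); ring
    · show (1 / 2 : ℚ) - 1 = -(1 / 2); ring
  rwa [heq] at h

/-- The inductive limit of `ℤ²` under `[[2,1],[1,2]]`, realized as the group
generated by `(1/3ⁿ, 0)`, `(0,1)`, `(1/2, 1/2)` in `ℚ²` with strict ordering
from the first coordinate, is ultrasimplicial. -/
theorem statement16 :
    IsUltrasimplicial
      ({g : limitGroup | 0 < ((g : ℚ × ℚ)).1} ∪ {0}) := by
  classical
  intro F hF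
  -- For each f, eventually in N we have a representation and a bound.
  have key : ∀ f ∈ F, ∀ᶠ N : ℕ in Filter.atTop,
      (∃ m k : ℤ, ((f : ℚ × ℚ)).1 = m / 3 ^ N + k / 2 ∧ ((f : ℚ × ℚ)).2 = k / 2) ∧
      |((f : ℚ × ℚ)).2| ≤ 3 ^ N * ((f : ℚ × ℚ)).1 := by
    intro f hf
    rcases hF hf with hpos | h0
    · obtain ⟨N0, m, k, h1, h2⟩ := limitGroup.rep f.2
      have hpos : (0 : ℚ) < ((f : ℚ × ℚ)).1 := hpos
      obtain ⟨N1, hN1⟩ := pow_unbounded_of_one_lt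
        (|((f : ℚ × ℚ)).2| / ((f : ℚ × ℚ)).1) (by norm_num : (1 : ℚ) < 3)
      filter_upwards [Filter.eventually_ge_atTop N0, Filter.eventually_ge_atTop N1]
        with N hN hN'
      constructor
      · refine ⟨m * 3 ^ (N - N0), k, ?_, h2⟩
        rw [h1]
        have hsplit : (3 : ℚ) ^ N = 3 ^ (N - N0) * 3 ^ N0 := by
          rw [← pow_add]; congr 1; omega
        push_cast
        rw [hsplit]
        have h5 : (3 : ℚ) ^ N0 ≠ 0 := by positivity
        have h6 : (3 : ℚ) ^ (N - N0) ≠ 0 := by positivity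
        field_simp
      · have hle : (3 : ℚ) ^ N1 ≤ 3 ^ N :=
          pow_le_pow_right₀ (by norm_num) hN'
        have := (div_lt_iff₀ hpos).mp (lt_of_lt_of_le hN1 hle)
        linarith
    · have h0 : f = 0 := h0
      refine Filter.Eventually.of_forall fun N => ⟨⟨0, 0, ?_, ?_⟩, ?_⟩ <;>
        simp [h0]
  obtain ⟨N, hN⟩ := ((Filter.eventually_all_finset F).2 key).exists
  obtain ⟨d, hd⟩ : Odd ((3 : ℤ) ^ N) := Odd.pow ⟨1, by ring⟩
  have hd' : (3 : ℚ) ^ N = 2 * (d : ℚ) + 1 := by exact_mod_cast hd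
  have h3 : (0 : ℚ) < 3 ^ N := by positivity
  set sv : ℚ × ℚ := ((1 / (2 * 3 ^ N) : ℚ), (1 / 2 : ℚ)) with hsv
  set tv : ℚ × ℚ := ((1 / (2 * 3 ^ N) : ℚ), (-(1 / 2) : ℚ)) with htv
  have hs : sv ∈ limitGroup := limitGroup.s_mem N d hd
  have ht : tv ∈ limitGroup := limitGroup.t_mem N d hd
  set sG : limitGroup := ⟨sv, hs⟩ with hsG
  set tG : limitGroup := ⟨tv, ht⟩ with htG
  have hst : sG ≠ tG := by
    intro h
    have : sv.2 = tv.2 := by rw [show sv = tv from congrArg Subtype.val h]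
    norm_num [hsv, htv] at this
  refine ⟨{sG, tG}, ?_, ?_, ?_⟩
  · intro x hx
    simp only [Finset.coe_insert, Finset.coe_singleton, Set.mem_insert_iff,
      Set.mem_singleton_iff] at hx
    rcases hx with rfl | rfl <;>
    · left
      show (0 : ℚ) < 1 / (2 * 3 ^ N)
      positivity
  · -- linear independence
    have hpair : LinearIndependent ℤ ![sG, tG] := by
      rw [LinearIndependent.pair_iff]
      intro a b hab
      have hab' : a • sv + b • tv = 0 := by
        have := congrArg (Subtype.val) hab
        exact this
      rw [Prod.ext_iff] at hab'
      obtain ⟨e1, e2⟩ := hab'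
      have e1' : (a : ℚ) * (1 / (2 * 3 ^ N)) + (b : ℚ) * (1 / (2 * 3 ^ N)) = 0 := by
        simpa [hsv, htv, zsmul_eq_mul] using e1
      have e2' : (a : ℚ) * (1 / 2) + (b : ℚ) * (-(1 / 2)) = 0 := by
        simpa [hsv, htv, zsmul_eq_mul] using e2
      have hab1 : (a : ℚ) + b = 0 := by
        have hne : (1 / (2 * 3 ^ N) : ℚ) ≠ 0 := by positivity
        have : ((a : ℚ) + b) * (1 / (2 * 3 ^ N)) = 0 := by linarith
        exact (mul_eq_zero.mp this).resolve_right hne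
      have hab2 : (a : ℚ) - b = 0 := by linarith
      have ha : (a : ℚ) = 0 := by linarith
      have hb : (b : ℚ) = 0 := by linarith
      exact ⟨by exact_mod_cast ha, by exact_mod_cast hb⟩
    have hrange : Set.range ![sG, tG] = (↑({sG, tG} : Finset limitGroup) : Set limitGroup) := by
      ext x
      simp [Matrix.range_cons, Matrix.range_empty, or_comm]
    have := hpair.linearIndepOn_id
    rw [hrange] at this
    exact this
  · intro f hf
    obtain ⟨⟨m, k, h1, h2⟩, hbound⟩ := hN f hf
    set c2 : ℤ := m + d * k with hc2def
    set c1 : ℤ := c2 + k with hc1def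
    have hc2 : (c2 : ℚ) = 3 ^ N * ((f : ℚ × ℚ)).1 - ((f : ℚ × ℚ)).2 := by
      rw [h1, h2, hc2def]
      push_cast
      rw [hd']
      have hne : (2 * (d : ℚ) + 1) ≠ 0 := by rw [← hd']; positivity
      have hm : (2 * (d : ℚ) + 1) * ((m : ℚ) / (2 * d + 1)) = m := by field_simp
      rw [mul_add, hm]
      ring
    have hc1 : (c1 : ℚ) = 3 ^ N * ((f : ℚ × ℚ)).1 + ((f : ℚ × ℚ)).2 := by
      rw [hc1def]
      push_cast
      rw [hc2, h2]
      ring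
    obtain ⟨hb1, hb2⟩ := abs_le.mp hbound
    have hc1nn : 0 ≤ c1 := by
      have : (0 : ℚ) ≤ (c1 : ℚ) := by rw [hc1]; linarith
      exact_mod_cast this
    have hc2nn : 0 ≤ c2 := by
      have : (0 : ℚ) ≤ (c2 : ℚ) := by rw [hc2]; linarith
      exact_mod_cast this
    refine ⟨fun g => if g = sG then c1.toNat else c2.toNat, ?_⟩
    rw [Finset.sum_pair hst]
    show f = (if sG = sG then c1.toNat else c2.toNat) • sG
        + (if tG = sG then c1.toNat else c2.toNat) • tG
    rw [if_pos rfl, if_neg (Ne.symm hst)]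
    apply Subtype.ext
    have hcoe : ((c1.toNat • sG + c2.toNat • tG : limitGroup) : ℚ × ℚ)
        = c1.toNat • sv + c2.toNat • tv := rfl
    rw [hcoe]
    have hc1' : ((c1.toNat : ℚ)) = (c1 : ℚ) := by
      exact_mod_cast congrArg (Int.cast : ℤ → ℚ) (Int.toNat_of_nonneg hc1nn)
    have hc2' : ((c2.toNat : ℚ)) = (c2 : ℚ) := by
      exact_mod_cast congrArg (Int.cast : ℤ → ℚ) (Int.toNat_of_nonneg hc2nn)
    rw [Prod.ext_iff]
    constructor
    · show ((f : ℚ × ℚ)).1 = c1.toNat • (1 / (2 * 3 ^ N) : ℚ) + c2.toNat • (1 / (2 * 3 ^ N) : ℚ)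
      rw [nsmul_eq_mul, nsmul_eq_mul, hc1', hc2', hc1, hc2]
      field_simp
      ring
    · show ((f : ℚ × ℚ)).2 = c1.toNat • (1 / 2 : ℚ) + c2.toNat • (-(1 / 2) : ℚ)
      rw [nsmul_eq_mul, nsmul_eq_mul, hc1', hc2', hc1, hc2]
      ring
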